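/- Let Ω ⊂ ℝ^d be a bounded connected open set, u† ∈ H²(Ω) with inf_Ω u† > 0, and q ∈ L²(Ω) with q ≥ 0 and ∫_Ω q > 0. Let u = u†/‖u†‖_{H²} and suppose ‖q‖_{L²} = 1 (q normalized). Define T = { u ⊗ a + b ⊗ q : a ∈ L²(Ω), b ∈ H²(Ω) } inside B2(H²(Ω); L²(Ω)). Suppose F = u ⊗ a + b ⊗ q satisfies u(x)a(x) + b(x)q(x) = 0 for a.e. x ∈ Ω and (∫_Ω q) b = −(∫_Ω a) u. Then F = 0. -/

import Mathlib

open MeasureTheory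

/-- Injectivity of the measurement operator on the model tangent space `T`, for the
internal-measurements toy problem: if `F = u ⊗ a + b ⊗ q` satisfies
`u(x)a(x) + b(x)q(x) = 0` a.e. and `(∫ q) b = -(∫ a) u`, then `F = 0`. -/
theorem stmt10 {d : ℕ} (Ω : Set (EuclideanSpace ℝ (Fin d)))
    (hΩo : IsOpen Ω) (hΩconn : IsConnected Ω) (hΩb : Bornology.IsBounded Ω)
    (hΩm : MeasurableSet Ω)
    (u a b q : EuclideanSpace ℝ (Fin d) → ℝ)
    -- `u` is the normalization of `u† ∈ H²(Ω)` with `inf_Ω u† > 0`: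
    (c : ℝ) (hc : 0 < c) (hcu : ∀ x ∈ Ω, c ≤ u x)
    (hum : AEStronglyMeasurable u (volume.restrict Ω))
    (ha : MemLp a 2 (volume.restrict Ω))
    (hb : MemLp b 2 (volume.restrict Ω))
    (hq : MemLp q 2 (volume.restrict Ω))
    (hqpos : 0 ≤ᵐ[volume.restrict Ω] q)
    (hqnorm : eLpNorm q 2 (volume.restrict Ω) = 1)
    (hqint : 0 < ∫ x, q x ∂(volume.restrict Ω))
    -- `u(x) a(x) + b(x) q(x) = 0` for a.e. `x ∈ Ω`:
    (hdiag : ∀ᵐ x ∂(volume.restrict Ω), u x * a x + b x * q x = 0)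
    -- `(∫ q) b = -(∫ a) u`:
    (hprop : ∀ᵐ x ∂(volume.restrict Ω),
      (∫ y, q y ∂(volume.restrict Ω)) * b x = -(∫ y, a y ∂(volume.restrict Ω)) * u x) :
    -- `F = 0`, i.e. `u(x) a(y) + b(x) q(y) = 0` a.e. on `Ω × Ω`:
    ∀ᵐ p ∂((volume.restrict Ω).prod (volume.restrict Ω)),
      u p.1 * a p.2 + b p.1 * q p.2 = 0 := by
  set μ := volume.restrict Ω
  set Q := ∫ y, q y ∂μ with hQdef
  set A := ∫ y, a y ∂μ with hAdef
  have hQ : Q ≠ 0 := ne_of_gt hqint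
  -- b = -(A/Q) u a.e.
  have hbu : ∀ᵐ x ∂μ, b x = -(A / Q) * u x := by
    filter_upwards [hprop] with x hx
    field_simp
    linarith [hx]
  -- a = (A/Q) q a.e.
  have haq : ∀ᵐ x ∂μ, a x = (A / Q) * q x := by
    filter_upwards [hdiag, hbu, ae_restrict_mem hΩm] with x h1 h2 hxΩ
    have hu : 0 < u x := lt_of_lt_of_le hc (hcu x hxΩ)
    rw [h2] at h1
    have : u x * (a x - (A / Q) * q x) = 0 := by ring_nf; ring_nf at h1; linarith
    rcases mul_eq_zero.mp this with h | h
    · exact absurd h (ne_of_gt hu)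
    · linarith
  have h1 : ∀ᵐ p ∂(μ.prod μ), b p.1 = -(A / Q) * u p.1 :=
    Measure.quasiMeasurePreserving_fst.ae hbu
  have h2 : ∀ᵐ p ∂(μ.prod μ), a p.2 = (A / Q) * q p.2 :=
    Measure.quasiMeasurePreserving_snd.ae haq
  filter_upwards [h1, h2] with p hp1 hp2
  rw [hp1, hp2]; ring
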